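/- For relatively prime positive integers m and n, the Lissajous–Chebyshev node set LC_{m,n} contains exactly (m+1)(n+1)/2 distinct points and admits the representation LC_{m,n} = {(cos(iπ/m), cos(jπ/n)) : (i, j) ∈ I_{m,n}}, where I_{m,n} = {(i, j) ∈ ℤ² : 0 ≤ i ≤ m, 0 ≤ j ≤ n, i + j ≡ 0 (mod 2)}. -/

import Mathlib

open Real

lemma cosLC_eq (m : ℕ) (hm : 0 < m) (a b : ℤ)
    (h : (2*(m:ℤ)) ∣ (a - b) ∨ (2*(m:ℤ)) ∣ (a + b)) :
    Real.cos ((a:ℝ) * π / m) = Real.cos ((b:ℝ) * π / m) := by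
  have hm' : (m:ℝ) ≠ 0 := Nat.cast_ne_zero.mpr hm.ne'
  rcases h with ⟨t, ht⟩ | ⟨t, ht⟩
  · have ha : (a:ℝ) = b + 2*m*t := by
      have : (a:ℝ) - b = 2*m*t := by exact_mod_cast ht
      linarith
    have : (a:ℝ) * π / m = (b:ℝ) * π / m + t * (2*π) := by
      rw [ha]; field_simp
    rw [this, Real.cos_add_int_mul_two_pi]
  · have ha : (a:ℝ) = -b + 2*m*t := by
      have : (a:ℝ) + b = 2*m*t := by exact_mod_cast ht
      linarith
    have : (a:ℝ) * π / m = (-(b:ℝ)) * π / m + t * (2*π) := by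
      rw [ha]; field_simp
    rw [this, Real.cos_add_int_mul_two_pi]
    rw [show (-(b:ℝ)) * π / m = -((b:ℝ) * π / m) by ring, Real.cos_neg]

lemma cosLC_inj (m : ℕ) (hm : 0 < m) (a b : ℕ) (ha : a ≤ m) (hb : b ≤ m)
    (h : Real.cos ((a:ℝ) * π / m) = Real.cos ((b:ℝ) * π / m)) : a = b := by
  have hm' : (0:ℝ) < m := Nat.cast_pos.mpr hm
  have hmem : ∀ c : ℕ, c ≤ m → (c:ℝ) * π / m ∈ Set.Icc 0 π := by
    intro c hc
    constructor
    · positivity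
    · rw [div_le_iff₀ hm']
      have : (c:ℝ) ≤ m := Nat.cast_le.mpr hc
      nlinarith [Real.pi_pos]
  have h2 := Real.injOn_cos (hmem a ha) (hmem b hb) h
  have h3 : (a:ℝ) = b := by
    have hπ := Real.pi_pos
    field_simp at h2
    exact h2
  exact_mod_cast h3

def fold (m k : ℕ) : ℕ := min (k % (2*m)) (2*m - k % (2*m))

lemma fold_le (m k : ℕ) (hm : 0 < m) : fold m k ≤ m := by
  have := Nat.mod_lt k (show 0 < 2*m by omega)
  rw [fold, Nat.min_def]
  split_ifs <;> omega

lemma fold_parity (m k : ℕ) (hm : 0 < m) : (fold m k) % 2 = k % 2 := by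
  have h := Nat.div_add_mod k (2*m)
  have e : 2*m*(k/(2*m)) = 2*(m*(k/(2*m))) := by ring
  rw [e] at h
  have hlt : k % (2*m) < 2*m := Nat.mod_lt k (by omega)
  rw [fold, Nat.min_def]
  split_ifs <;> omega

lemma fold_dvd (m k : ℕ) (hm : 0 < m) :
    (2*(m:ℤ)) ∣ ((k:ℤ) - fold m k) ∨ (2*(m:ℤ)) ∣ ((k:ℤ) + fold m k) := by
  have hlt : k % (2*m) < 2*m := Nat.mod_lt k (by omega)
  have h1 : k = 2*m*(k/(2*m)) + k % (2*m) := (Nat.div_add_mod _ _).symm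
  have h1' : (k:ℤ) = 2*m*((k/(2*m) : ℕ) : ℤ) + ((k % (2*m) : ℕ) : ℤ) := by
    exact_mod_cast congrArg (Nat.cast : ℕ → ℤ) h1
  rw [fold, Nat.min_def]
  split_ifs with h
  · left
    exact ⟨((k/(2*m) : ℕ) : ℤ), by linarith⟩
  · right
    refine ⟨((k/(2*m) : ℕ) : ℤ) + 1, ?_⟩
    have : ((2*m - k % (2*m) : ℕ) : ℤ) = 2*(m:ℤ) - ((k % (2*m) : ℕ) : ℤ) := by
      push_cast [Nat.cast_sub hlt.le]; ring
    rw [this]; linarith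

lemma crt_exists (m n : ℕ) (hm : 0 < m) (hn : 0 < n) (hmn : Nat.Coprime m n)
    (i j : ℕ) (hi : i ≤ m) (hj : j ≤ n) (hp : (i + j) % 2 = 0) :
    ∃ k : ℕ, k ≤ m * n ∧
      ((2*(m:ℤ)) ∣ ((k:ℤ) - i) ∨ (2*(m:ℤ)) ∣ ((k:ℤ) + i)) ∧
      ((2*(n:ℤ)) ∣ ((k:ℤ) - j) ∨ (2*(n:ℤ)) ∣ ((k:ℤ) + j)) := by
  obtain ⟨u, v, huv⟩ : ∃ u v : ℤ, u * m + v * n = 1 := by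
    refine ⟨Nat.gcdA m n, Nat.gcdB m n, ?_⟩
    have := Nat.gcd_eq_gcd_ab m n
    rw [hmn] at this
    push_cast at this
    linarith [this]
  obtain ⟨d, hd⟩ : ∃ d : ℤ, (j:ℤ) - i = 2 * d := by
    refine ⟨((j:ℤ) - i)/2, ?_⟩
    omega
  set k1 : ℤ := (i:ℤ) + 2*d*u*m with hk1
  have hki : (2*(m:ℤ)) ∣ (k1 - i) := ⟨d*u, by rw [hk1]; ring⟩
  have hkj : (2*(n:ℤ)) ∣ (k1 - j) := by
    refine ⟨-(d*v), ?_⟩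
    have h5 : k1 - j = -2*d + 2*d*u*m := by rw [hk1]; linarith
    rw [h5]
    have h6 : u * m = 1 - v * n := by linarith
    rw [show (-2:ℤ)*d + 2*d*u*m = 2*d*(u*m) - 2*d by ring, h6]
    ring
  have hmn0 : (0:ℤ) < 2*m*n := by positivity
  set k0 : ℤ := k1 % (2*m*n) with hk0
  have hk0nn : 0 ≤ k0 := Int.emod_nonneg k1 (by positivity)
  have hk0lt : k0 < 2*m*n := Int.emod_lt_of_pos k1 hmn0
  have hdvd0 : (2*(m:ℤ)*n) ∣ (k1 - k0) := Int.dvd_self_sub_of_emod_eq rfl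
  have hdm : (2*(m:ℤ)) ∣ (k1 - k0) := dvd_trans ⟨n, by ring⟩ hdvd0
  have hdn : (2*(n:ℤ)) ∣ (k1 - k0) := dvd_trans ⟨m, by ring⟩ hdvd0
  have hk0i : (2*(m:ℤ)) ∣ (k0 - i) := by
    rw [show k0 - i = (k1 - i) - (k1 - k0) by ring]; exact dvd_sub hki hdm
  have hk0j : (2*(n:ℤ)) ∣ (k0 - j) := by
    rw [show k0 - j = (k1 - j) - (k1 - k0) by ring]; exact dvd_sub hkj hdn
  rcases le_or_gt k0 (m*n : ℤ) with hle | hgt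
  · refine ⟨k0.toNat, ?_, Or.inl ?_, Or.inl ?_⟩
    · exact_mod_cast (Int.toNat_le.mpr hle)
    · rwa [Int.toNat_of_nonneg hk0nn]
    · rwa [Int.toNat_of_nonneg hk0nn]
  · refine ⟨(2*m*n - k0).toNat, ?_, Or.inr ?_, Or.inr ?_⟩
    · have h7 : (2*(m:ℤ)*n - k0) ≤ m*n := by push_cast; linarith
      omega
    · rw [Int.toNat_of_nonneg (by push_cast; omega)]
      rw [show 2*(m:ℤ)*n - k0 + i = -(k0 - i) + 2*m*n by push_cast; ring]
      exact dvd_add (Dvd.dvd.neg_right hk0i) ⟨n, by ring⟩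
    · rw [Int.toNat_of_nonneg (by push_cast; omega)]
      rw [show 2*(m:ℤ)*n - k0 + j = -(k0 - j) + 2*m*n by push_cast; ring]
      exact dvd_add (Dvd.dvd.neg_right hk0j) ⟨m, by ring⟩

/-- Proposition 3.1: the Lissajous–Chebyshev node set `LC_{m,n}` consists of
`(m+1)(n+1)/2` distinct points and equals `{(cos(iπ/m), cos(jπ/n)) : (i,j) ∈ I_{m,n}}`. -/
theorem stmt_2 (m n : ℕ) (hm : 0 < m) (hn : 0 < n) (hmn : Nat.Coprime m n) :
    ({q : ℝ × ℝ | ∃ k : ℕ, k ≤ m * n ∧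
        q = (Real.cos (n * (π * k / (m * n))), Real.cos (m * (π * k / (m * n))))} =
      {q : ℝ × ℝ | ∃ i j : ℕ, i ≤ m ∧ j ≤ n ∧ (i + j) % 2 = 0 ∧
        q = (Real.cos (i * π / m), Real.cos (j * π / n))}) ∧
    Set.ncard {q : ℝ × ℝ | ∃ k : ℕ, k ≤ m * n ∧
        q = (Real.cos (n * (π * k / (m * n))), Real.cos (m * (π * k / (m * n))))} =
      (m + 1) * (n + 1) / 2 := by
  classical
  have hm' : (m:ℝ) ≠ 0 := Nat.cast_ne_zero.mpr hm.ne'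
  have hn' : (n:ℝ) ≠ 0 := Nat.cast_ne_zero.mpr hn.ne'
  have harg1 : ∀ k : ℕ, (n:ℝ) * (π * k / (m*n)) = (k:ℝ) * π / m := by
    intro k; field_simp
  have harg2 : ∀ k : ℕ, (m:ℝ) * (π * k / (m*n)) = (k:ℝ) * π / n := by
    intro k; field_simp
  have hseteq : ({q : ℝ × ℝ | ∃ k : ℕ, k ≤ m * n ∧
        q = (Real.cos (n * (π * k / (m * n))), Real.cos (m * (π * k / (m * n))))} =
      {q : ℝ × ℝ | ∃ i j : ℕ, i ≤ m ∧ j ≤ n ∧ (i + j) % 2 = 0 ∧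
        q = (Real.cos (i * π / m), Real.cos (j * π / n))}) := by
    ext q
    simp only [Set.mem_setOf_eq]
    constructor
    · rintro ⟨k, hk, rfl⟩
      refine ⟨fold m k, fold n k, fold_le m k hm, fold_le n k hn, ?_, ?_⟩
      · have h1 := fold_parity m k hm
        have h2 := fold_parity n k hn
        omega
      · rw [harg1, harg2]
        have h1 : Real.cos ((k:ℝ)*π/m) = Real.cos ((fold m k : ℝ)*π/m) := by
          have := cosLC_eq m hm (k:ℤ) (fold m k : ℤ) (by exact_mod_cast fold_dvd m k hm)
          push_cast at this
          exact this
        have h2 : Real.cos ((k:ℝ)*π/n) = Real.cos ((fold n k : ℝ)*π/n) := by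
          have := cosLC_eq n hn (k:ℤ) (fold n k : ℤ) (by exact_mod_cast fold_dvd n k hn)
          push_cast at this
          exact this
        rw [h1, h2]
    · rintro ⟨i, j, hi, hj, hp, rfl⟩
      obtain ⟨k, hk, h1, h2⟩ := crt_exists m n hm hn hmn i j hi hj hp
      refine ⟨k, hk, ?_⟩
      rw [harg1, harg2]
      have e1 : Real.cos ((k:ℝ)*π/m) = Real.cos ((i:ℝ)*π/m) := by
        have := cosLC_eq m hm (k:ℤ) (i:ℤ) h1
        push_cast at this
        exact this
      have e2 : Real.cos ((k:ℝ)*π/n) = Real.cos ((j:ℝ)*π/n) := by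
        have := cosLC_eq n hn (k:ℤ) (j:ℤ) h2
        push_cast at this
        exact this
      rw [e1, e2]
  refine ⟨hseteq, ?_⟩
  rw [hseteq]
  set f : ℕ × ℕ → ℝ × ℝ := fun p => (Real.cos ((p.1:ℝ)*π/m), Real.cos ((p.2:ℝ)*π/n)) with hf
  set T : Finset (ℕ × ℕ) :=
    (Finset.range (m+1) ×ˢ Finset.range (n+1)).filter (fun p => (p.1+p.2)%2 = 0) with hT
  have hmemT : ∀ p : ℕ × ℕ, p ∈ T ↔ p.1 ≤ m ∧ p.2 ≤ n ∧ (p.1+p.2)%2 = 0 := by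
    intro p
    simp only [hT, Finset.mem_filter, Finset.mem_product, Finset.mem_range]
    omega
  have hset2 : {q : ℝ × ℝ | ∃ i j : ℕ, i ≤ m ∧ j ≤ n ∧ (i + j) % 2 = 0 ∧
        q = (Real.cos (i * π / m), Real.cos (j * π / n))} = ↑(T.image f) := by
    ext q
    simp only [Finset.coe_image, Set.mem_image, Finset.mem_coe, Set.mem_setOf_eq]
    constructor
    · rintro ⟨i, j, hi, hj, hp, rfl⟩
      exact ⟨(i,j), (hmemT (i,j)).mpr ⟨hi, hj, hp⟩, rfl⟩
    · rintro ⟨⟨i,j⟩, hp, rfl⟩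
      rw [hmemT] at hp
      exact ⟨i, j, hp.1, hp.2.1, hp.2.2, rfl⟩
  rw [hset2, Set.ncard_coe_finset]
  have hinj : Set.InjOn f ↑T := by
    rintro ⟨a,b⟩ ha ⟨c,d⟩ hc h
    rw [Finset.mem_coe, hmemT] at ha hc
    simp only [hf, Prod.ext_iff] at h
    have e1 := cosLC_inj m hm a c ha.1 hc.1 h.1
    have e2 := cosLC_inj n hn b d ha.2.1 hc.2.1 h.2
    simp only [Prod.ext_iff]
    exact ⟨e1, e2⟩
  rw [Finset.card_image_of_injOn hinj]
  set Todd : Finset (ℕ × ℕ) :=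
    (Finset.range (m+1) ×ˢ Finset.range (n+1)).filter (fun p => ¬((p.1+p.2)%2 = 0)) with hTodd
  have hsum : T.card + Todd.card = (m+1)*(n+1) := by
    rw [hT, hTodd, Finset.card_filter_add_card_filter_not]
    simp [Finset.card_product]
  have hmemTodd : ∀ p : ℕ × ℕ, p ∈ Todd ↔ p.1 ≤ m ∧ p.2 ≤ n ∧ (p.1+p.2)%2 = 1 := by
    intro p
    simp only [hTodd, Finset.mem_filter, Finset.mem_product, Finset.mem_range]
    omega
  have hodd : m % 2 = 1 ∨ n % 2 = 1 := by
    by_contra hcon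
    push_neg at hcon
    have h2m : 2 ∣ m := by omega
    have h2n : 2 ∣ n := by omega
    have h2g : (2:ℕ) ∣ Nat.gcd m n := Nat.dvd_gcd h2m h2n
    rw [Nat.Coprime] at hmn
    omega
  have hcard_eq : T.card = Todd.card := by
    rcases hodd with ho | ho
    · refine Finset.card_nbij' (fun p => (m - p.1, p.2)) (fun p => (m - p.1, p.2)) ?_ ?_ ?_ ?_
      · rintro ⟨a,b⟩ hp
        rw [Finset.mem_coe, hmemT] at hp
        rw [Finset.mem_coe, hmemTodd]
        dsimp only at hp ⊢
        omega
      · rintro ⟨a,b⟩ hp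
        rw [Finset.mem_coe, hmemTodd] at hp
        rw [Finset.mem_coe, hmemT]
        dsimp only at hp ⊢
        omega
      · rintro ⟨a,b⟩ hp
        rw [Finset.mem_coe, hmemT] at hp
        dsimp only at hp ⊢
        rw [Nat.sub_sub_self hp.1]
      · rintro ⟨a,b⟩ hp
        rw [Finset.mem_coe, hmemTodd] at hp
        dsimp only at hp ⊢
        rw [Nat.sub_sub_self hp.1]
    · refine Finset.card_nbij' (fun p => (p.1, n - p.2)) (fun p => (p.1, n - p.2)) ?_ ?_ ?_ ?_
      · rintro ⟨a,b⟩ hp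
        rw [Finset.mem_coe, hmemT] at hp
        rw [Finset.mem_coe, hmemTodd]
        dsimp only at hp ⊢
        omega
      · rintro ⟨a,b⟩ hp
        rw [Finset.mem_coe, hmemTodd] at hp
        rw [Finset.mem_coe, hmemT]
        dsimp only at hp ⊢
        omega
      · rintro ⟨a,b⟩ hp
        rw [Finset.mem_coe, hmemT] at hp
        dsimp only at hp ⊢
        rw [Nat.sub_sub_self hp.2.1]
      · rintro ⟨a,b⟩ hp
        rw [Finset.mem_coe, hmemTodd] at hp
        dsimp only at hp ⊢
        rw [Nat.sub_sub_self hp.2.1]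
  omega
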